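/- arXiv:0906.5103 — 2 statements merged into one kernel-verified Lean document; each statement's English description precedes it below -/
import Mathlib

section
/- For real numbers a, b ≥ 0 and β ≥ 1, one has (a+b)^β ≤ a^β + β·2^(β-1)·(a^(β-1)·b + b^β). -/
open Real

theorem stmt_0 (a b β : ℝ) (ha : 0 ≤ a) (hb : 0 ≤ b) (hβ : 1 ≤ β) :
    (a + b) ^ β ≤ a ^ β + β * 2 ^ (β - 1) * (a ^ (β - 1) * b + b ^ β) := by
  have hβ0 : (0:ℝ) < β := by linarith
  have hp : 0 ≤ β - 1 := by linarith
  rcases eq_or_lt_of_le (by positivity : (0:ℝ) ≤ a + b) with hab | hab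
  · rw [← hab, Real.zero_rpow (ne_of_gt hβ0)]
    positivity
  -- Step 1: (a+b)^β ≤ a^β + β * (a+b)^(β-1) * b, by Bernoulli with s = -b/(a+b)
  have hs : (-1:ℝ) ≤ -b / (a + b) := by
    rw [neg_div, neg_le_neg_iff]
    exact div_le_one_of_le₀ (by linarith) (le_of_lt hab)
  have hbern := one_add_mul_self_le_rpow_one_add hs hβ
  have h1s : 1 + -b / (a + b) = a / (a + b) := by field_simp; ring
  rw [h1s] at hbern
  have key1 : (a + b) ^ β ≤ a ^ β + β * (a + b) ^ (β - 1) * b := by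
    have h := mul_le_mul_of_nonneg_right hbern (Real.rpow_nonneg hab.le β)
    rw [Real.div_rpow ha hab.le, div_mul_cancel₀] at h
    · have hexp : (a + b) ^ (β - 1) * (a + b) = (a + b) ^ β := by
        rw [← Real.rpow_add_one (ne_of_gt hab)]
        ring_nf
      have h2 : (1 + β * (-b / (a + b))) * (a + b) ^ β
          = (a + b) ^ β - β * (a + b) ^ (β - 1) * b := by
        rw [← hexp]; field_simp; ring
      rw [h2] at h
      linarith
    · exact ne_of_gt (Real.rpow_pos_of_pos hab β)
  -- Step 2: (a+b)^(β-1) ≤ 2^(β-1) * (a^(β-1) + b^(β-1))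
  have key2 : (a + b) ^ (β - 1) ≤ 2 ^ (β - 1) * (a ^ (β - 1) + b ^ (β - 1)) := by
    have hmax : a + b ≤ 2 * max a b := by
      rcases le_total a b with h | h <;> simp [max_eq_right, max_eq_left, h] <;> linarith
    have h2 : (a + b) ^ (β - 1) ≤ (2 * max a b) ^ (β - 1) :=
      Real.rpow_le_rpow (by positivity) hmax hp
    have h3 : (2 * max a b) ^ (β - 1) = 2 ^ (β - 1) * (max a b) ^ (β - 1) :=
      Real.mul_rpow (by norm_num) (le_max_of_le_left ha)
    have h4 : (max a b) ^ (β - 1) ≤ a ^ (β - 1) + b ^ (β - 1) := by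
      rcases le_total a b with h | h
      · rw [max_eq_right h]; nlinarith [Real.rpow_nonneg ha (β - 1)]
      · rw [max_eq_left h]; nlinarith [Real.rpow_nonneg hb (β - 1)]
    calc (a + b) ^ (β - 1) ≤ 2 ^ (β - 1) * (max a b) ^ (β - 1) := by rw [← h3]; exact h2
      _ ≤ 2 ^ (β - 1) * (a ^ (β - 1) + b ^ (β - 1)) := by
          apply mul_le_mul_of_nonneg_left h4 (by positivity)
  -- Combine
  have hbb : b ^ (β - 1) * b = b ^ β := by
    rw [show β = (β - 1) + 1 by ring,
      Real.rpow_add' hb (by rw [sub_add_cancel]; exact ne_of_gt hβ0), Real.rpow_one]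
    ring_nf
  calc (a + b) ^ β ≤ a ^ β + β * (a + b) ^ (β - 1) * b := key1
    _ ≤ a ^ β + β * (2 ^ (β - 1) * (a ^ (β - 1) + b ^ (β - 1))) * b := by
        have := mul_le_mul_of_nonneg_left key2 hβ0.le
        nlinarith
    _ = a ^ β + β * 2 ^ (β - 1) * (a ^ (β - 1) * b + b ^ (β - 1) * b) := by ring
    _ = a ^ β + β * 2 ^ (β - 1) * (a ^ (β - 1) * b + b ^ β) := by rw [hbb]
end

section
/- Let f : M → [−∞,∞] be measurable on a finite measure space, A, β, γ > 0, C > 0 and s₀ > 1. Then the condition m(f,s) ≤ A·s^(−β)·(1 + C·(log s)^(−γ)) for all s > s₀ holds if and only if there exist C' > 0 and t₀ < 1 with f*(t) ≤ A^(1/β)·t^(−1/β)·(1 + C'·|log t|^(−γ)) for all t < t₀. -/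
open MeasureTheory Real

/-- The nonincreasing rearrangement of `f` with respect to `μ`, at level `t : ℝ≥0∞`:
`f*(t) = inf {s ≥ 0 : μ{|f| > s} ≤ t}`. -/
noncomputable def rearrangement {α : Type*} [MeasurableSpace α] (μ : Measure α)
    (f : α → ℝ) (t : ENNReal) : ℝ :=
  sInf {s : ℝ | 0 ≤ s ∧ μ {x | s < |f x|} ≤ t}

section Aux

variable {M : Type*} [MeasurableSpace M] {μ : Measure M} [IsFiniteMeasure μ] {f : M → ℝ}

/-- Bernoulli-type inequality: `1 + (p/2) u ≤ (1+u)^p` for `0 < p`, `u ∈ [0,1]`. -/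
lemma bern_aux {p u : ℝ} (hp : 0 < p) (hu0 : 0 ≤ u) (hu1 : u ≤ 1) :
    1 + p / 2 * u ≤ (1 + u) ^ p := by
  have h1u : (0:ℝ) < 1 + u := by linarith
  have hexp : Real.exp (u / 2) ≤ 1 + u := by
    have h2 : 1 - u / 2 ≤ Real.exp (-(u / 2)) := by
      have := Real.add_one_le_exp (-(u / 2)); linarith
    have h4 : Real.exp (u / 2) * (1 - u / 2) ≤ 1 := by
      calc Real.exp (u / 2) * (1 - u / 2)
          ≤ Real.exp (u / 2) * Real.exp (-(u / 2)) :=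
            mul_le_mul_of_nonneg_left h2 (Real.exp_pos _).le
        _ = 1 := by rw [← Real.exp_add]; simp
    nlinarith [Real.exp_pos (u / 2)]
  have hlog : u / 2 ≤ Real.log (1 + u) := by
    calc u / 2 = Real.log (Real.exp (u / 2)) := (Real.log_exp _).symm
      _ ≤ Real.log (1 + u) := by
          rw [Real.log_le_log_iff (Real.exp_pos _) h1u]; exact hexp
  have hmul : p * (u / 2) ≤ p * Real.log (1 + u) :=
    mul_le_mul_of_nonneg_left hlog hp.le
  calc 1 + p / 2 * u = 1 + p * (u / 2) := by ring
    _ ≤ 1 + p * Real.log (1 + u) := by linarith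
    _ ≤ Real.exp (p * Real.log (1 + u)) := by
        linarith [Real.add_one_le_exp (p * Real.log (1 + u))]
    _ = (1 + u) ^ p := by rw [Real.rpow_def_of_pos h1u, mul_comm]

/-- Antitonicity of `x ↦ x^(-c)` on positives. -/
lemma rpow_neg_anti {x y c : ℝ} (hx : 0 < x) (hxy : x ≤ y) (hc : 0 ≤ c) :
    y ^ (-c) ≤ x ^ (-c) := by
  have hy : 0 < y := lt_of_lt_of_le hx hxy
  rw [Real.rpow_neg hy.le, Real.rpow_neg hx.le]
  exact inv_anti₀ (Real.rpow_pos_of_pos hx c) (Real.rpow_le_rpow hx.le hxy hc)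

lemma exists_small (hf : Measurable f) {t : ℝ} (ht : 0 < t) :
    ∃ s : ℝ, 0 ≤ s ∧ μ {x | s < |f x|} ≤ ENNReal.ofReal t := by
  have hA : Antitone (fun n : ℕ => {x | (n : ℝ) < |f x|}) := by
    intro m n hmn x hx
    exact lt_of_le_of_lt (by exact_mod_cast hmn : (m : ℝ) ≤ (n : ℝ)) hx
  have hI : (⋂ n : ℕ, {x | (n : ℝ) < |f x|}) = ∅ := by
    ext x
    simp only [Set.mem_iInter, Set.mem_setOf_eq, Set.mem_empty_iff_false, iff_false, not_forall,
      not_lt]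
    obtain ⟨n, hn⟩ := exists_nat_gt |f x|
    exact ⟨n, hn.le⟩
  have htend := tendsto_measure_iInter_atTop (μ := μ)
    (fun n => (measurableSet_lt measurable_const hf.abs).nullMeasurableSet) hA
    ⟨0, measure_ne_top μ _⟩
  rw [hI, measure_empty] at htend
  have hpos : (0 : ENNReal) < ENNReal.ofReal t := ENNReal.ofReal_pos.mpr ht
  obtain ⟨n, hn⟩ := (htend.eventually_le_const hpos).exists
  exact ⟨(n : ℝ), Nat.cast_nonneg n, hn⟩

lemma rearr_le (hf : Measurable f) {t s : ℝ} (hs : 0 ≤ s)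
    (h : μ {x | s < |f x|} ≤ ENNReal.ofReal t) :
    rearrangement μ f (ENNReal.ofReal t) ≤ s :=
  csInf_le ⟨0, fun _ hy => hy.1⟩ ⟨hs, h⟩

lemma rearr_mem (hf : Measurable f) {t : ℝ} (ht : 0 < t) :
    μ {x | rearrangement μ f (ENNReal.ofReal t) < |f x|} ≤ ENNReal.ofReal t := by
  set S := {s : ℝ | 0 ≤ s ∧ μ {x | s < |f x|} ≤ ENNReal.ofReal t} with hS
  have hne : S.Nonempty := exists_small hf ht
  set r := sInf S with hr
  have hrdef : rearrangement μ f (ENNReal.ofReal t) = r := rfl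
  have hU : {x | r < |f x|} = ⋃ n : ℕ, {x | r + 1 / ((n : ℝ) + 1) < |f x|} := by
    ext x
    simp only [Set.mem_setOf_eq, Set.mem_iUnion]
    constructor
    · intro hx
      obtain ⟨n, hn⟩ := exists_nat_one_div_lt (sub_pos.mpr hx)
      exact ⟨n, by linarith⟩
    · rintro ⟨n, hn⟩
      have : (0 : ℝ) < 1 / ((n : ℝ) + 1) := by positivity
      linarith
  have hmono : Monotone (fun n : ℕ => {x | r + 1 / ((n : ℝ) + 1) < |f x|}) := by
    intro m n hmn x hx
    simp only [Set.mem_setOf_eq] at hx ⊢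
    have h1 : (1 : ℝ) / ((n : ℝ) + 1) ≤ 1 / ((m : ℝ) + 1) := by
      apply one_div_le_one_div_of_le (by positivity)
      have : (m : ℝ) ≤ n := by exact_mod_cast hmn
      linarith
    exact lt_of_le_of_lt (by linarith) hx
  have htend := tendsto_measure_iUnion_atTop (μ := μ) hmono
  have hb : ∀ n : ℕ, μ {x | r + 1 / ((n : ℝ) + 1) < |f x|} ≤ ENNReal.ofReal t := by
    intro n
    have hlt : r < r + 1 / ((n : ℝ) + 1) := by
      have : (0 : ℝ) < 1 / ((n : ℝ) + 1) := by positivity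
      linarith
    obtain ⟨s, hsS, hs⟩ := exists_lt_of_csInf_lt hne hlt
    exact le_trans (measure_mono fun x hx => lt_trans hs hx) hsS.2
  have := le_of_tendsto' htend (fun n => hb n)
  rw [hrdef, hU]
  exact this

end Aux

set_option maxHeartbeats 1000000 in
theorem stmt_8 {M : Type*} [MeasurableSpace M] (μ : Measure M) [IsFiniteMeasure μ]
    (f : M → ℝ) (hf : Measurable f) (A β γ : ℝ) (hA : 0 < A) (hβ : 0 < β) (hγ : 0 < γ) :
    (∃ C > (0 : ℝ), ∃ s₀ > (1 : ℝ), ∀ s > s₀,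
        μ {x | s < |f x|} ≤ ENNReal.ofReal (A * s ^ (-β) * (1 + C * (Real.log s) ^ (-γ)))) ↔
    (∃ C' > (0 : ℝ), ∃ t₀ : ℝ, t₀ < 1 ∧ 0 < t₀ ∧ ∀ t : ℝ, 0 < t → t < t₀ →
        rearrangement μ f (ENNReal.ofReal t) ≤
          A ^ (1 / β) * t ^ (-(1 / β)) * (1 + C' * |Real.log t| ^ (-γ))) := by
  constructor
  · rintro ⟨C, hC, s₀, hs₀, hyp⟩
    set C' : ℝ := 2 * C * (2 * β) ^ γ / β with hC'def
    have h2β : (0:ℝ) < 2 * β := by linarith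
    have hC' : 0 < C' := by
      have := Real.rpow_pos_of_pos h2β γ
      positivity
    obtain ⟨R, hRa, hRb, hRc, hR1⟩ :
        ∃ R : ℝ, C' ^ (1 / γ) < R ∧ 2 * |Real.log A| < R ∧ 2 * β * Real.log s₀ < R ∧ 1 ≤ R := by
      refine ⟨max (max (C' ^ (1 / γ)) (2 * |Real.log A|)) (max (2 * β * Real.log s₀) 1) + 1,
        ?_, ?_, ?_, ?_⟩
      · linarith [le_max_left (C' ^ (1 / γ)) (2 * |Real.log A|),
          le_max_left (max (C' ^ (1 / γ)) (2 * |Real.log A|)) (max (2 * β * Real.log s₀) 1)]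
      · linarith [le_max_right (C' ^ (1 / γ)) (2 * |Real.log A|),
          le_max_left (max (C' ^ (1 / γ)) (2 * |Real.log A|)) (max (2 * β * Real.log s₀) 1)]
      · linarith [le_max_left (2 * β * Real.log s₀) (1:ℝ),
          le_max_right (max (C' ^ (1 / γ)) (2 * |Real.log A|)) (max (2 * β * Real.log s₀) 1)]
      · linarith [le_max_right (2 * β * Real.log s₀) (1:ℝ),
          le_max_right (max (C' ^ (1 / γ)) (2 * |Real.log A|)) (max (2 * β * Real.log s₀) 1)]
    refine ⟨C', hC', Real.exp (-R), ?_, Real.exp_pos _, ?_⟩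
    · have : -R < 0 := by linarith
      calc Real.exp (-R) < Real.exp 0 := Real.exp_lt_exp.mpr this
        _ = 1 := Real.exp_zero
    · intro t ht htlt
      set L : ℝ := -Real.log t with hLdef
      have hlogt : Real.log t < -R := by
        have := Real.log_lt_log ht htlt
        rwa [Real.log_exp] at this
      have hLR : R < L := by rw [hLdef]; linarith
      have hL0 : (0:ℝ) < L := by linarith
      have habs : |Real.log t| = L := by
        rw [hLdef, abs_of_neg (by linarith : Real.log t < 0)]
      set u : ℝ := C' * L ^ (-γ) with hudef
      have hLγ : (0:ℝ) < L ^ γ := Real.rpow_pos_of_pos hL0 γ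
      have hu0 : 0 ≤ u := by
        have := Real.rpow_pos_of_pos hL0 (-γ)
        positivity
      have hu1 : u ≤ 1 := by
        have h1 : C' ^ (1 / γ) ≤ L := by linarith
        have h2 : C' ≤ L ^ γ := by
          calc C' = (C' ^ (1 / γ)) ^ γ := by
                rw [← Real.rpow_mul hC'.le, one_div, inv_mul_cancel₀ hγ.ne', Real.rpow_one]
            _ ≤ L ^ γ := Real.rpow_le_rpow (Real.rpow_nonneg hC'.le _) h1 hγ.le
        rw [hudef, Real.rpow_neg hL0.le]
        calc C' * (L ^ γ)⁻¹ ≤ L ^ γ * (L ^ γ)⁻¹ :=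
              mul_le_mul_of_nonneg_right h2 (inv_nonneg.mpr hLγ.le)
          _ = 1 := mul_inv_cancel₀ hLγ.ne'
      have h1u : (0:ℝ) < 1 + u := by linarith
      set s : ℝ := A ^ (1 / β) * t ^ (-(1 / β)) * (1 + u) with hsdef
      have hA1β : (0:ℝ) < A ^ (1 / β) := Real.rpow_pos_of_pos hA _
      have ht1β : (0:ℝ) < t ^ (-(1 / β)) := Real.rpow_pos_of_pos ht _
      have hspos : 0 < s := by positivity
      have hlogs : Real.log s = (1 / β) * Real.log A + (1 / β) * L + Real.log (1 + u) := by
        rw [hsdef, Real.log_mul (by positivity) h1u.ne', Real.log_mul hA1β.ne' ht1β.ne',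
          Real.log_rpow hA, Real.log_rpow ht, hLdef]
        ring
      have habsA : 2 * |Real.log A| ≤ L := by linarith
      have hlogA : -(L / 2) ≤ Real.log A := by
        have := neg_abs_le (Real.log A); linarith
      have hlogs_ge : L / (2 * β) ≤ Real.log s := by
        have hlog1u : 0 ≤ Real.log (1 + u) := Real.log_nonneg (by linarith)
        have hmul : (1 / β) * (-(L / 2)) ≤ (1 / β) * Real.log A :=
          mul_le_mul_of_nonneg_left hlogA (by positivity)
        have heq : (1 / β) * (-(L / 2)) + (1 / β) * L = L / (2 * β) := by
          field_simp; ring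
        rw [hlogs]; linarith
      have hsgt : s₀ < s := by
        have h1 : 2 * β * Real.log s₀ < L := by linarith
        have h2 : Real.log s₀ < L / (2 * β) := by
          rw [lt_div_iff₀ h2β]; linarith
        have h3 : Real.log s₀ < Real.log s := by linarith
        calc s₀ = Real.exp (Real.log s₀) := (Real.exp_log (by linarith)).symm
          _ < Real.exp (Real.log s) := Real.exp_lt_exp.mpr h3
          _ = s := Real.exp_log hspos
      have hlogs_pos : 0 < Real.log s := lt_of_lt_of_le (by positivity) hlogs_ge
      -- key: A * s^(-β) * (1 + C * (log s)^(-γ)) ≤ t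
      have hstep1 : A * s ^ (-β) = t * (1 + u) ^ (-β) := by
        rw [hsdef, Real.mul_rpow (by positivity) h1u.le,
          Real.mul_rpow hA1β.le ht1β.le, ← Real.rpow_mul hA.le, ← Real.rpow_mul ht.le]
        have e1 : 1 / β * (-β) = -1 := by field_simp
        have e2 : -(1 / β) * (-β) = 1 := by field_simp
        rw [e1, e2, Real.rpow_neg_one, Real.rpow_one]
        field_simp
      have hstep2 : (Real.log s) ^ (-γ) ≤ (2 * β) ^ γ * L ^ (-γ) := by
        have h1 : (Real.log s) ^ (-γ) ≤ (L / (2 * β)) ^ (-γ) :=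
          rpow_neg_anti (by positivity) hlogs_ge hγ.le
        have h2 : (L / (2 * β)) ^ (-γ) = (2 * β) ^ γ * L ^ (-γ) := by
          rw [Real.div_rpow hL0.le h2β.le, Real.rpow_neg hL0.le, Real.rpow_neg h2β.le]
          rw [div_inv_eq_mul]
          field_simp
        linarith [h1, h2.le]
      have hstep3 : C * ((2 * β) ^ γ * L ^ (-γ)) = β / 2 * u := by
        rw [hudef, hC'def]; field_simp
      have hbern : 1 + β / 2 * u ≤ (1 + u) ^ β := bern_aux hβ hu0 hu1
      have hCmul : C * (Real.log s) ^ (-γ) ≤ β / 2 * u := by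
        calc C * (Real.log s) ^ (-γ) ≤ C * ((2 * β) ^ γ * L ^ (-γ)) :=
              mul_le_mul_of_nonneg_left hstep2 hC.le
          _ = β / 2 * u := hstep3
      have hmain : A * s ^ (-β) * (1 + C * (Real.log s) ^ (-γ)) ≤ t := by
        have hinv : (1 + u) ^ (-β) * (1 + u) ^ β = 1 := by
          rw [← Real.rpow_add h1u]; simp
        have h1 : 1 + C * (Real.log s) ^ (-γ) ≤ (1 + u) ^ β := by linarith
        have h2 : (0:ℝ) ≤ (1 + u) ^ (-β) := (Real.rpow_pos_of_pos h1u _).le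
        calc A * s ^ (-β) * (1 + C * (Real.log s) ^ (-γ))
            = t * ((1 + u) ^ (-β) * (1 + C * (Real.log s) ^ (-γ))) := by rw [hstep1]; ring
          _ ≤ t * ((1 + u) ^ (-β) * (1 + u) ^ β) := by
              apply mul_le_mul_of_nonneg_left _ ht.le
              exact mul_le_mul_of_nonneg_left h1 h2
          _ = t := by rw [hinv, mul_one]
      have hμ : μ {x | s < |f x|} ≤ ENNReal.ofReal t :=
        le_trans (hyp s hsgt) (ENNReal.ofReal_le_ofReal hmain)
      have := rearr_le hf hspos.le hμ
      rw [habs]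
      exact this
  · rintro ⟨C', hC', t₀, ht₀1, ht₀0, hyp⟩
    set C : ℝ := 2 * β * C' * (2 / β) ^ γ with hCdef
    have h2β : (0:ℝ) < 2 / β := by positivity
    have hCpos : 0 < C := by
      have := Real.rpow_pos_of_pos h2β γ
      positivity
    obtain ⟨R, hRa, hRb, hRc, hR1⟩ :
        ∃ R : ℝ, C ^ (1 / γ) < R ∧ 2 * Real.log (2 * A) / β < R ∧
          Real.log (2 * A / t₀) / β < R ∧ 1 ≤ R := by
      refine ⟨max (max (C ^ (1 / γ)) (2 * Real.log (2 * A) / β))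
        (max (Real.log (2 * A / t₀) / β) 1) + 1, ?_, ?_, ?_, ?_⟩
      · linarith [le_max_left (C ^ (1 / γ)) (2 * Real.log (2 * A) / β),
          le_max_left (max (C ^ (1 / γ)) (2 * Real.log (2 * A) / β))
            (max (Real.log (2 * A / t₀) / β) 1)]
      · linarith [le_max_right (C ^ (1 / γ)) (2 * Real.log (2 * A) / β),
          le_max_left (max (C ^ (1 / γ)) (2 * Real.log (2 * A) / β))
            (max (Real.log (2 * A / t₀) / β) 1)]
      · linarith [le_max_left (Real.log (2 * A / t₀) / β) (1:ℝ),
          le_max_right (max (C ^ (1 / γ)) (2 * Real.log (2 * A) / β))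
            (max (Real.log (2 * A / t₀) / β) 1)]
      · linarith [le_max_right (Real.log (2 * A / t₀) / β) (1:ℝ),
          le_max_right (max (C ^ (1 / γ)) (2 * Real.log (2 * A) / β))
            (max (Real.log (2 * A / t₀) / β) 1)]
    refine ⟨C, hCpos, Real.exp R, ?_, ?_⟩
    · calc (1:ℝ) = Real.exp 0 := Real.exp_zero.symm
        _ < Real.exp R := Real.exp_lt_exp.mpr (by linarith)
    · intro s hs
      set S : ℝ := Real.log s with hSdef
      have hspos : 0 < s := lt_trans (Real.exp_pos R) hs
      have hSR : R < S := by
        rw [hSdef]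
        have := Real.log_lt_log (Real.exp_pos R) hs
        rwa [Real.log_exp] at this
      have hS0 : (0:ℝ) < S := by linarith
      set u : ℝ := C * S ^ (-γ) with hudef
      have hSγ : (0:ℝ) < S ^ γ := Real.rpow_pos_of_pos hS0 γ
      have hu0 : 0 ≤ u := by
        have := Real.rpow_pos_of_pos hS0 (-γ)
        positivity
      have hu1 : u ≤ 1 := by
        have h1 : C ^ (1 / γ) ≤ S := by linarith
        have h2 : C ≤ S ^ γ := by
          calc C = (C ^ (1 / γ)) ^ γ := by
                rw [← Real.rpow_mul hCpos.le, one_div, inv_mul_cancel₀ hγ.ne', Real.rpow_one]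
            _ ≤ S ^ γ := Real.rpow_le_rpow (Real.rpow_nonneg hCpos.le _) h1 hγ.le
        rw [hudef, Real.rpow_neg hS0.le]
        calc C * (S ^ γ)⁻¹ ≤ S ^ γ * (S ^ γ)⁻¹ :=
              mul_le_mul_of_nonneg_right h2 (inv_nonneg.mpr hSγ.le)
          _ = 1 := mul_inv_cancel₀ hSγ.ne'
      have h1u : (0:ℝ) < 1 + u := by linarith
      set t : ℝ := A * s ^ (-β) * (1 + u) with htdef
      have hsβ : (0:ℝ) < s ^ (-β) := Real.rpow_pos_of_pos hspos _
      have htpos : 0 < t := by positivity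
      have hlogt : Real.log t = Real.log A + (-β) * S + Real.log (1 + u) := by
        rw [htdef, Real.log_mul (by positivity) h1u.ne', Real.log_mul hA.ne' hsβ.ne',
          Real.log_rpow hspos, hSdef]
      have hlog1u : Real.log (1 + u) ≤ Real.log 2 := by
        rw [Real.log_le_log_iff h1u (by norm_num)]; linarith
      have hlog1u0 : 0 ≤ Real.log (1 + u) := Real.log_nonneg (by linarith)
      have hlog2A : Real.log (2 * A) ≤ β * S / 2 := by
        rcases le_or_gt (Real.log (2 * A)) 0 with h | h
        · have : (0:ℝ) ≤ β * S / 2 := by positivity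
          linarith
        · have h2 : 2 * Real.log (2 * A) / β ≤ S := by linarith
          rw [div_le_iff₀ hβ] at h2
          linarith
      have hlogt_le : Real.log t ≤ -(β * S / 2) := by
        have : Real.log A + Real.log 2 = Real.log (2 * A) := by
          rw [Real.log_mul (by norm_num) hA.ne']; ring
        rw [hlogt]; linarith
      have hβS : (0:ℝ) < β * S / 2 := by positivity
      have ht1 : t < 1 := by
        have : Real.log t < 0 := by linarith
        by_contra h
        push_neg at h
        have := Real.log_nonneg h
        linarith
      have habs : |Real.log t| = -Real.log t := abs_of_neg (by linarith)
      have habs_ge : β * S / 2 ≤ |Real.log t| := by rw [habs]; linarith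
      -- t < t₀
      have htt₀ : t < t₀ := by
        have h2 : Real.log (2 * A / t₀) / β < S := by linarith
        rw [div_lt_iff₀ hβ] at h2
        have h3 : Real.log (2 * A / t₀) = Real.log (2 * A) - Real.log t₀ := by
          rw [Real.log_div (by positivity) ht₀0.ne']
        have h4 : Real.log t < Real.log t₀ := by
          have hlog2A' : Real.log A + Real.log 2 = Real.log (2 * A) := by
            rw [Real.log_mul (by norm_num) hA.ne']; ring
          rw [hlogt]; linarith
        calc t = Real.exp (Real.log t) := (Real.exp_log htpos).symm
          _ < Real.exp (Real.log t₀) := Real.exp_lt_exp.mpr h4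
          _ = t₀ := Real.exp_log ht₀0
      -- the rearrangement bound at t
      have hrb := hyp t htpos htt₀
      -- g(t) ≤ s
      have hstep1 : A ^ (1 / β) * t ^ (-(1 / β)) = s * (1 + u) ^ (-(1 / β)) := by
        rw [htdef, Real.mul_rpow (by positivity) h1u.le,
          Real.mul_rpow hA.le hsβ.le, ← Real.rpow_mul hspos.le]
        have e1 : -β * -(1 / β) = 1 := by field_simp
        rw [e1, Real.rpow_one]
        have e3 : A ^ (1 / β) * (A ^ (-(1 / β)) * s * (1 + u) ^ (-(1 / β)))
            = (A ^ (1 / β) * A ^ (-(1 / β))) * (s * (1 + u) ^ (-(1 / β))) := by ring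
        rw [e3, ← Real.rpow_add hA]
        simp
      have hstep2 : |Real.log t| ^ (-γ) ≤ (2 / β) ^ γ * S ^ (-γ) := by
        have h1 : |Real.log t| ^ (-γ) ≤ (β * S / 2) ^ (-γ) :=
          rpow_neg_anti hβS habs_ge hγ.le
        have h2 : (β * S / 2) ^ (-γ) = (2 / β) ^ γ * S ^ (-γ) := by
          have e : β * S / 2 = S / (2 / β) := by field_simp
          rw [e, Real.div_rpow hS0.le h2β.le, Real.rpow_neg hS0.le, Real.rpow_neg h2β.le]
          rw [div_inv_eq_mul]
          field_simp
        linarith [h1, h2.le]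
      have hstep3 : C' * ((2 / β) ^ γ * S ^ (-γ)) = (1 / β) / 2 * u := by
        rw [hudef, hCdef]; field_simp
      have hbern : 1 + (1 / β) / 2 * u ≤ (1 + u) ^ (1 / β) := bern_aux (by positivity) hu0 hu1
      have hC'mul : C' * |Real.log t| ^ (-γ) ≤ (1 / β) / 2 * u := by
        calc C' * |Real.log t| ^ (-γ) ≤ C' * ((2 / β) ^ γ * S ^ (-γ)) :=
              mul_le_mul_of_nonneg_left hstep2 hC'.le
          _ = (1 / β) / 2 * u := hstep3
      have hgs : A ^ (1 / β) * t ^ (-(1 / β)) * (1 + C' * |Real.log t| ^ (-γ)) ≤ s := by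
        have hinv : (1 + u) ^ (-(1 / β)) * (1 + u) ^ (1 / β) = 1 := by
          rw [← Real.rpow_add h1u]; simp
        have h1 : 1 + C' * |Real.log t| ^ (-γ) ≤ (1 + u) ^ (1 / β) := by linarith
        have h2 : (0:ℝ) ≤ (1 + u) ^ (-(1 / β)) := (Real.rpow_pos_of_pos h1u _).le
        calc A ^ (1 / β) * t ^ (-(1 / β)) * (1 + C' * |Real.log t| ^ (-γ))
            = s * ((1 + u) ^ (-(1 / β)) * (1 + C' * |Real.log t| ^ (-γ))) := by
              rw [hstep1]; ring
          _ ≤ s * ((1 + u) ^ (-(1 / β)) * (1 + u) ^ (1 / β)) := by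
              apply mul_le_mul_of_nonneg_left _ hspos.le
              exact mul_le_mul_of_nonneg_left h1 h2
          _ = s := by rw [hinv, mul_one]
      have hrs : rearrangement μ f (ENNReal.ofReal t) ≤ s := le_trans hrb hgs
      have hmono : μ {x | s < |f x|} ≤ μ {x | rearrangement μ f (ENNReal.ofReal t) < |f x|} :=
        measure_mono fun x hx => lt_of_le_of_lt hrs hx
      exact le_trans hmono (rearr_mem hf htpos)
end
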